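/- Let C ∈ (-1, 0) and ν ∈ (0, |C|). Set θ_SP(ν) = (1/2)·arccos((1 + ν^2 - 2C^2)/(1 - ν^2)) and ξ_SP(ν) = arccos(-(ν/C)·√((1-C^2)/(1-ν^2))). Then: sin(θ_SP(ν)) = √((C^2-ν^2)/(1-ν^2)); cos(θ_SP(ν)) = √((1-C^2)/(1-ν^2)); ξ_SP(ν) ∈ (0, π/2); sin(ξ_SP(ν)) = (1/|C|)·√((C^2-ν^2)/(1-ν^2)); and cos(ξ_SP(ν)) = -(ν/C)·√((1-C^2)/(1-ν^2)). -/

import Mathlib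

open Real

/-- For `C ∈ (-1,0)` and `ν ∈ (0,|C|)`, with
`θ_SP = arccos((1+ν²-2C²)/(1-ν²))/2` and `ξ_SP = arccos(-(ν/C)√((1-C²)/(1-ν²)))`:
`sin θ_SP = √((C²-ν²)/(1-ν²))`, `cos θ_SP = √((1-C²)/(1-ν²))`, `ξ_SP ∈ (0, π/2)`,
`sin ξ_SP = (1/|C|)·√((C²-ν²)/(1-ν²))`, and `cos ξ_SP = -(ν/C)·√((1-C²)/(1-ν²))`. -/
theorem saddle_point_angles_trig_identities (C ν : ℝ)
    (hC : C ∈ Set.Ioo (-1 : ℝ) 0) (hν : ν ∈ Set.Ioo 0 |C|) :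
    let θSP : ℝ := Real.arccos ((1 + ν ^ 2 - 2 * C ^ 2) / (1 - ν ^ 2)) / 2
    let ξSP : ℝ := Real.arccos (-(ν / C) * Real.sqrt ((1 - C ^ 2) / (1 - ν ^ 2)))
    Real.sin θSP = Real.sqrt ((C ^ 2 - ν ^ 2) / (1 - ν ^ 2)) ∧
    Real.cos θSP = Real.sqrt ((1 - C ^ 2) / (1 - ν ^ 2)) ∧
    (0 < ξSP ∧ ξSP < Real.pi / 2) ∧
    Real.sin ξSP = (1 / |C|) * Real.sqrt ((C ^ 2 - ν ^ 2) / (1 - ν ^ 2)) ∧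
    Real.cos ξSP = -(ν / C) * Real.sqrt ((1 - C ^ 2) / (1 - ν ^ 2)) := by
  obtain ⟨hC1, hC0⟩ := hC
  obtain ⟨hν0, hν1⟩ := hν
  have habs : |C| = -C := abs_of_neg hC0
  rw [habs] at hν1
  have hνC : ν ^ 2 < C ^ 2 := by nlinarith
  have hC2 : C ^ 2 < 1 := by nlinarith
  have hν2 : ν ^ 2 < 1 := by nlinarith
  have hden : (0 : ℝ) < 1 - ν ^ 2 := by linarith
  have hC0' : C ≠ 0 := ne_of_lt hC0
  set A : ℝ := (1 + ν ^ 2 - 2 * C ^ 2) / (1 - ν ^ 2) with hA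
  have hA1 : -1 ≤ A := by
    rw [hA, le_div_iff₀ hden]; nlinarith
  have hA2 : A ≤ 1 := by
    rw [hA, div_le_one hden]; nlinarith
  have hcosA : Real.cos (Real.arccos A) = A := Real.cos_arccos hA1 hA2
  have hyl : -Real.pi ≤ Real.arccos A :=
    le_trans (neg_nonpos.mpr Real.pi_pos.le) (Real.arccos_nonneg A)
  have hyr : Real.arccos A ≤ Real.pi := Real.arccos_le_pi A
  have hyr2 : Real.arccos A ≤ 2 * Real.pi := by linarith [Real.pi_pos]
  have hsinθ : Real.sin (Real.arccos A / 2) = Real.sqrt ((C ^ 2 - ν ^ 2) / (1 - ν ^ 2)) := by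
    rw [Real.sin_half_eq_sqrt (Real.arccos_nonneg A) hyr2, hcosA]
    congr 1
    rw [hA]; field_simp
    ring
  have hcosθ : Real.cos (Real.arccos A / 2) = Real.sqrt ((1 - C ^ 2) / (1 - ν ^ 2)) := by
    rw [Real.cos_half hyl hyr, hcosA]
    congr 1
    rw [hA]; field_simp
    ring
  -- now ξ part
  set s : ℝ := (1 - C ^ 2) / (1 - ν ^ 2) with hs
  have hs0 : 0 ≤ s := by rw [hs]; exact div_nonneg (by linarith) hden.le
  set x : ℝ := -(ν / C) * Real.sqrt s with hx
  have hx0 : 0 < x := by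
    apply mul_pos
    · rw [neg_pos]
      exact div_neg_of_pos_of_neg hν0 hC0
    · exact Real.sqrt_pos.mpr (div_pos (by linarith) hden)
  have hxsq : x ^ 2 = ν ^ 2 * (1 - C ^ 2) / (C ^ 2 * (1 - ν ^ 2)) := by
    rw [hx, mul_pow, neg_pow, Real.sq_sqrt hs0, hs]
    field_simp
  have hx1 : x < 1 := by
    have hx2 : x ^ 2 < 1 := by
      rw [hxsq, div_lt_one (by positivity)]
      nlinarith
    nlinarith
  refine ⟨hsinθ, hcosθ, ⟨Real.arccos_pos.mpr hx1, Real.arccos_lt_pi_div_two.mpr hx0⟩, ?_, ?_⟩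
  · rw [Real.sin_arccos]
    have h1x : 1 - x ^ 2 = ((C ^ 2 - ν ^ 2) / (1 - ν ^ 2)) / C ^ 2 := by
      rw [hxsq]; field_simp; ring
    rw [h1x, Real.sqrt_div' _ (by positivity : (0:ℝ) ≤ C ^ 2), Real.sqrt_sq_eq_abs,
      div_eq_mul_inv, mul_comm, one_div]
  · exact Real.cos_arccos (by linarith) (le_of_lt hx1)
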